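/- Let X be a nonempty compact metric space. Then X is antipodal (for every x ∈ X there exists x̄ ∈ X with d(x,x̄) = d(x,y) + d(y,x̄) for all y ∈ X) if and only if the tight span E(X) is a convex subset of the space of real-valued functions on X: for all f, g ∈ E(X) and all λ ∈ [0,1], the function λf + (1−λ)g belongs to E(X). -/

import Mathlib

/-- `Δ(X)`: functions satisfying `f x + f y ≥ d(x, y)`. -/
def DeltaSet (X : Type*) [MetricSpace X] : Set (X → ℝ) :=
  {f | ∀ x y : X, dist x y ≤ f x + f y}

/-- The tight span `E(X)`: pointwise minimal elements of `Δ(X)`. -/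
def TightSpan (X : Type*) [MetricSpace X] : Set (X → ℝ) :=
  {f | f ∈ DeltaSet X ∧ ∀ g ∈ DeltaSet X, (∀ x, g x ≤ f x) → g = f}

lemma delta_nonneg {X : Type*} [MetricSpace X] {f : X → ℝ} (hf : f ∈ DeltaSet X) (x : X) :
    0 ≤ f x := by
  have := hf x x
  simp at this
  linarith

lemma tight_approx {X : Type*} [MetricSpace X] {f : X → ℝ} (hf : f ∈ TightSpan X) (x : X)
    {ε : ℝ} (hε : 0 < ε) : ∃ y, f x + f y < dist x y + ε := by
  classical
  by_contra hc
  push_neg at hc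
  set g : X → ℝ := fun z => if z = x then f x - ε / 2 else f z with hgdef
  have hgd : g ∈ DeltaSet X := by
    intro a b
    by_cases ha : a = x
    · by_cases hb : b = x
      · have h1 := hc x
        simp only [dist_self, zero_add] at h1
        simp [g, ha, hb, dist_self]
        linarith
      · have h1 := hc b
        simp [g, ha, hb]
        linarith
    · by_cases hb : b = x
      · have h1 := hc a
        rw [dist_comm x a] at h1
        simp [g, ha, hb]
        linarith
      · simp only [g, ha, hb, if_neg, if_false]
        exact hf.1 a b
  have hle : ∀ z, g z ≤ f z := by
    intro z
    by_cases hz : z = x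
    · subst hz; simp [g]; linarith
    · simp [g, hz]
  have heq := hf.2 g hgd hle
  have := congrFun heq x
  simp [g] at this
  linarith

lemma tight_lipschitz {X : Type*} [MetricSpace X] {f : X → ℝ} (hf : f ∈ TightSpan X)
    (x y : X) : f x ≤ f y + dist x y := by
  refine le_of_forall_pos_le_add ?_
  intro ε hε
  obtain ⟨z, hz⟩ := tight_approx hf x hε
  have t := dist_triangle x y z
  have hd := hf.1 y z
  linarith

lemma tight_attain {X : Type*} [MetricSpace X] [Nonempty X] [CompactSpace X] {f : X → ℝ}
    (hf : f ∈ TightSpan X) (x : X) : ∃ y, f x + f y = dist x y := by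
  have hcont : Continuous f := by
    apply LipschitzWith.continuous (K := 1)
    apply LipschitzWith.of_dist_le_mul
    intro a b
    rw [Real.dist_eq]
    simp only [NNReal.coe_one, one_mul]
    rw [abs_sub_le_iff]
    constructor
    · have := tight_lipschitz hf a b
      linarith
    · have := tight_lipschitz hf b a
      rw [dist_comm b a] at this
      linarith
  have hFcont : Continuous fun y => f x + f y - dist x y :=
    (continuous_const.add hcont).sub (continuous_const.dist continuous_id)
  obtain ⟨y₀, -, hmin'⟩ := IsCompact.exists_isMinOn isCompact_univ Set.univ_nonempty
    hFcont.continuousOn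
  have hmin := isMinOn_iff.mp hmin'
  have h0 : f x + f y₀ - dist x y₀ ≤ 0 := by
    by_contra hpos
    push_neg at hpos
    obtain ⟨z, hz⟩ := tight_approx hf x hpos
    have := hmin z (Set.mem_univ z)
    linarith
  exact ⟨y₀, le_antisymm (by linarith) (hf.1 x y₀)⟩

lemma kappa_mem {X : Type*} [MetricSpace X] (x : X) : (fun y => dist x y) ∈ TightSpan X := by
  constructor
  · intro a b
    have := dist_triangle a x b
    rw [dist_comm a x] at this
    linarith
  · intro g hg hle
    funext y
    show g y = dist x y
    have h0 : g x = 0 := le_antisymm (by simpa using hle x) (delta_nonneg hg x)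
    have h1 := hg x y
    have h2 : g y ≤ dist x y := hle y
    linarith

/-- A nonempty compact metric space `X` is antipodal if and only if its tight span
is a convex subset of the space of real-valued functions on `X`. -/
theorem antipodal_iff_tightSpan_convex {X : Type*} [MetricSpace X] [Nonempty X]
    [CompactSpace X] :
    (∀ x : X, ∃ xb : X, ∀ y : X, dist x xb = dist x y + dist y xb) ↔
    (∀ f ∈ TightSpan X, ∀ g ∈ TightSpan X, ∀ l ∈ Set.Icc (0 : ℝ) 1,
      (fun x : X => l * f x + (1 - l) * g x) ∈ TightSpan X) := by
  constructor
  · intro hant f hf g hg l hl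
    obtain ⟨hl0, hl1⟩ := hl
    choose bar hbar using hant
    have key : ∀ (f : X → ℝ), f ∈ TightSpan X → ∀ x, f x + f (bar x) = dist x (bar x) := by
      intro f hf x
      obtain ⟨y, hy⟩ := tight_attain hf x
      have hlip := tight_lipschitz hf (bar x) y
      have hb := hbar x y
      have hd := hf.1 x (bar x)
      rw [dist_comm (bar x) y] at hlip
      linarith
    have hfe := key f hf
    have hge := key g hg
    constructor
    · intro a b
      have h1 := hf.1 a b
      have h2 := hg.1 a b
      have e1 : l * dist a b ≤ l * (f a + f b) := mul_le_mul_of_nonneg_left h1 hl0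
      have e2 : (1 - l) * dist a b ≤ (1 - l) * (g a + g b) :=
        mul_le_mul_of_nonneg_left h2 (by linarith)
      show dist a b ≤ (l * f a + (1 - l) * g a) + (l * f b + (1 - l) * g b)
      nlinarith [e1, e2]
    · intro g' hg' hle
      funext x
      show g' x = l * f x + (1 - l) * g x
      have e1 := hfe x
      have e2 := hge x
      have h3 := hg' x (bar x)
      have h4 : g' x ≤ l * f x + (1 - l) * g x := hle x
      have h5 : g' (bar x) ≤ l * f (bar x) + (1 - l) * g (bar x) := hle (bar x)
      have m1 : l * (f x + f (bar x)) = l * dist x (bar x) := by rw [e1]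
      have m2 : (1 - l) * (g x + g (bar x)) = (1 - l) * dist x (bar x) := by rw [e2]
      nlinarith [m1, m2]
  · intro hconv x
    obtain ⟨xb, -, hmax'⟩ := IsCompact.exists_isMaxOn isCompact_univ Set.univ_nonempty
      (Continuous.continuousOn (f := fun z : X => dist x z) (continuous_const.dist continuous_id) (s := Set.univ))
    have hmax := isMaxOn_iff.mp hmax'
    refine ⟨xb, fun y => ?_⟩
    have hmem := hconv _ (kappa_mem y) _ (kappa_mem xb) (1 / 2) (by norm_num)
    obtain ⟨w, hw⟩ := tight_attain hmem x
    have hw' : (1 / 2 : ℝ) * dist y x + (1 - 1 / 2) * dist xb x +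
        ((1 / 2 : ℝ) * dist y w + (1 - 1 / 2) * dist xb w) = dist x w := hw
    have t1 := dist_triangle x y w
    have t2 := dist_triangle x xb w
    have t3 := dist_triangle y xb w
    have t4 := dist_triangle y w xb
    have hm : dist x w ≤ dist x xb := hmax w (Set.mem_univ w)
    have hn : (0 : ℝ) ≤ dist xb w := dist_nonneg
    rw [dist_comm w xb] at t4
    rw [dist_comm y x, dist_comm xb x] at hw'
    linarith
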